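/- Let (X,d) be a linear metric space such that t ↦ d(0,tx) is strictly increasing on [0,1] for each nonzero x, and let C ⊆ X be such that for every pair of distinct x, y ∈ C there exist tₙ ∈ (0,1) with zₙ := (1+tₙ)y − tₙx ∈ C and zₙ → y. Then d is a sleek metric for C in the subspace topology. -/

import Mathlib

theorem sleek_subset_of_strictMono {X : Type*} [AddCommGroup X]
    [Module ℝ X] [MetricSpace X] [IsTopologicalAddGroup X] [ContinuousSMul ℝ X]
    (hinv : ∀ a x y : X, dist (a + x) (a + y) = dist x y)
    (hmono : ∀ x : X, x ≠ 0 →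
      StrictMonoOn (fun t : ℝ => dist (0 : X) (t • x)) (Set.Icc 0 1))
    (C : Set X)
    (hC : ∀ x ∈ C, ∀ y ∈ C, x ≠ y → ∃ t : ℕ → ℝ,
      (∀ n, t n ∈ Set.Ioo (0 : ℝ) 1) ∧
      (∀ n, (1 + t n) • y - t n • x ∈ C) ∧
      Filter.Tendsto (fun n => (1 + t n) • y - t n • x) Filter.atTop (nhds y)) :
    ∀ (x : C) (r : ℝ), 0 < r →
      interior (Metric.closedBall x r) = Metric.ball x r := by
  intro x r hr
  apply subset_antisymm
  · intro z hz
    have hle : dist z x ≤ r := Metric.mem_closedBall.mp (interior_subset hz)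
    rw [Metric.mem_ball]
    by_contra hlt
    have heq : dist z x = r := le_antisymm hle (not_lt.mp hlt)
    have hne : (x : X) ≠ (z : X) := by
      intro h
      have : dist z x = 0 := by
        rw [dist_comm, Subtype.dist_eq, h, dist_self]
      linarith [heq ▸ this]
    obtain ⟨t, ht, hmem, htend⟩ := hC x x.2 z z.2 hne
    set w : ℕ → C := fun n => ⟨(1 + t n) • (z : X) - t n • (x : X), hmem n⟩ with hw
    have hwt : Filter.Tendsto w Filter.atTop (nhds z) := by
      rw [tendsto_subtype_rng]
      exact htend
    have hnhds : Metric.closedBall x r ∈ nhds z := mem_interior_iff_mem_nhds.mp hz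
    have hev : ∀ᶠ n in Filter.atTop, w n ∈ Metric.closedBall x r := hwt.eventually_mem hnhds
    obtain ⟨n, hn⟩ := hev.exists
    have hnle : dist (w n) x ≤ r := Metric.mem_closedBall.mp hn
    -- setup
    set v : X := (z : X) - (x : X) with hv
    have hvne : v ≠ 0 := sub_ne_zero.mpr (fun h => hne h.symm)
    have htn := ht n
    have h1t : (0:ℝ) < 1 + t n := by linarith [htn.1]
    set u : X := (1 + t n) • v with hu
    have hune : u ≠ 0 := smul_ne_zero (by positivity) hvne
    -- dist (w n) x = dist 0 u
    have hd1 : dist ((w n : X)) (x : X) = dist (0 : X) u := by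
      have : ((w n : X)) = (x : X) + u := by
        simp only [hw, hu, hv, smul_sub]
        module
      rw [this]
      calc dist ((x:X) + u) (x:X) = dist ((x:X) + u) ((x:X) + 0) := by rw [add_zero]
        _ = dist u 0 := hinv _ _ _
        _ = dist 0 u := dist_comm _ _
    -- dist 0 v = r
    have hd2 : dist (0 : X) v = r := by
      have : dist v 0 = dist (z : X) (x : X) := by
        calc dist v 0 = dist ((x:X) + v) ((x:X) + 0) := (hinv _ _ _).symm
          _ = dist (z : X) (x : X) := by rw [add_zero, hv]; congr 1; abel
      rw [dist_comm, this, ← Subtype.dist_eq, heq]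
    -- strict monotonicity: dist 0 v < dist 0 u
    have hs : (1 + t n)⁻¹ ∈ Set.Icc (0:ℝ) 1 := by
      constructor
      · positivity
      · rw [inv_le_one_iff₀]; right; linarith [htn.1]
    have hs1 : (1:ℝ) ∈ Set.Icc (0:ℝ) 1 := by norm_num
    have hslt : (1 + t n)⁻¹ < 1 := by
      rw [inv_lt_one_iff₀]; right; linarith [htn.1]
    have hmlt := hmono u hune hs hs1 hslt
    simp only [one_smul] at hmlt
    have hsm : (1 + t n)⁻¹ • u = v := by
      rw [hu, smul_smul, inv_mul_cancel₀ (ne_of_gt h1t), one_smul]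
    rw [hsm, hd2] at hmlt
    have : dist (w n) x = dist (0 : X) u := by rw [Subtype.dist_eq]; exact hd1
    linarith [this ▸ hnle]
  · exact interior_maximal Metric.ball_subset_closedBall Metric.isOpen_ball
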